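/- Let f_H(t,s) = (t+s)^{H−1/2} − s^{H−1/2} for t ∈ [0,T], s > 0. If H ∈ [1/2, 1], then |f_H(t',s) − f_H(t,s)| ≤ |t' − t|^{H−1/2} for all t, t' ∈ [0,T], s > 0 (when H > 1/2); and if H ∈ (0, 1/2], then |f_H(t',s) − f_H(t,s)| ≤ C|t' − t|^{1/2−H} s^{2H−1} for all t, t' ∈ [0,T], s > 0, for some constant C. -/

import Mathlib

-- real subadditivity of rpow for 0 ≤ p ≤ 1
lemma mvn_rpow_sub_le (a b p : ℝ) (ha : 0 ≤ a) (hab : a ≤ b)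
    (hp0 : 0 ≤ p) (hp1 : p ≤ 1) : b ^ p - a ^ p ≤ (b - a) ^ p := by
  have hba : 0 ≤ b - a := by linarith
  have key := NNReal.rpow_add_le_add_rpow (b - a).toNNReal a.toNNReal hp0 hp1
  have := NNReal.coe_le_coe.2 key
  push_cast [NNReal.coe_rpow, Real.coe_toNNReal _ hba, Real.coe_toNNReal _ ha] at this
  have hb : b - a + a = b := by ring
  rw [hb] at this
  linarith

lemma mvn_abs_rpow_sub (x y p : ℝ) (hx : 0 ≤ x) (hy : 0 ≤ y)
    (hp0 : 0 ≤ p) (hp1 : p ≤ 1) : |x ^ p - y ^ p| ≤ |x - y| ^ p := by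
  rcases le_total y x with h | h
  · rw [abs_of_nonneg (by linarith : (0:ℝ) ≤ x - y)]
    have h1 := mvn_rpow_sub_le y x p hy h hp0 hp1
    have h2 : (0:ℝ) ≤ y ^ p := Real.rpow_nonneg hy p
    rw [abs_le]
    constructor
    · have : (0:ℝ) ≤ (x - y) ^ p := Real.rpow_nonneg (by linarith) p
      nlinarith [Real.rpow_le_rpow hy h hp0]
    · linarith
  · rw [abs_of_nonpos (by linarith : x - y ≤ 0), neg_sub]
    have h1 := mvn_rpow_sub_le x y p hx h hp0 hp1
    have h2 : x ^ p ≤ y ^ p := Real.rpow_le_rpow hx h hp0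
    have h3 : (0:ℝ) ≤ (y - x) ^ p := Real.rpow_nonneg (by linarith) p
    rw [abs_le]
    constructor <;> linarith
lemma mvn_neg_exp (α s a b : ℝ) (hα0 : α < 0) (hα1 : -1 ≤ α)
    (hs : 0 < s) (hsa : s ≤ a) (hab : a ≤ b) :
    a ^ α - b ^ α ≤ (b - a) ^ (-α) * s ^ (2 * α) := by
  have ha : 0 < a := lt_of_lt_of_le hs hsa
  have hRHS0 : 0 ≤ (b - a) ^ (-α) * s ^ (2 * α) :=
    mul_nonneg (Real.rpow_nonneg (by linarith) _) (Real.rpow_nonneg hs.le _)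
  rcases eq_or_lt_of_le hab with rfl | hab'
  · simpa using hRHS0
  -- D ≥ 0 and D ≤ A := s ^ α
  have hD0 : 0 ≤ a ^ α - b ^ α := by
    have := Real.rpow_le_rpow_of_nonpos ha hab hα0.le
    linarith
  have hDA : a ^ α - b ^ α ≤ s ^ α := by
    have h1 : a ^ α ≤ s ^ α := Real.rpow_le_rpow_of_nonpos hs hsa hα0.le
    have h2 : 0 ≤ b ^ α := Real.rpow_nonneg (by linarith) α
    linarith
  -- MVT bound: D ≤ B := (-α) * s ^ (α - 1) * (b - a)
  obtain ⟨c, hc, hslope⟩ := exists_hasDerivAt_eq_slope (fun x => x ^ α)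
    (fun x => α * x ^ (α - 1)) hab'
    (fun x hx => (Real.continuousAt_rpow_const x α
      (Or.inl (by nlinarith [hx.1] : x ≠ 0))).continuousWithinAt)
    (fun x hx => Real.hasDerivAt_rpow_const (Or.inl (by nlinarith [hx.1] : x ≠ 0)))
  have hc1 : a < c := hc.1
  have hcd : c ^ (α - 1) ≤ s ^ (α - 1) :=
    Real.rpow_le_rpow_of_nonpos hs (by linarith) (by linarith)
  have hDB : a ^ α - b ^ α ≤ (-α) * s ^ (α - 1) * (b - a) := by
    have hba : 0 < b - a := by linarith
    have heq : b ^ α - a ^ α = α * c ^ (α - 1) * (b - a) := by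
      field_simp at hslope
      linarith [hslope]
    have heq2 : a ^ α - b ^ α = (-α) * (c ^ (α - 1) * (b - a)) := by
      linear_combination -heq
    have h3 : c ^ (α - 1) * (b - a) ≤ s ^ (α - 1) * (b - a) :=
      mul_le_mul_of_nonneg_right hcd hba.le
    have h4 : (-α) * (c ^ (α - 1) * (b - a)) ≤ (-α) * (s ^ (α - 1) * (b - a)) :=
      mul_le_mul_of_nonneg_left h3 (by linarith)
    have h5 : (-α) * (s ^ (α - 1) * (b - a)) = -α * s ^ (α - 1) * (b - a) := by ring
    linarith
  set D := a ^ α - b ^ α with hD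
  rcases eq_or_lt_of_le hD0 with h0 | hDpos
  · rw [← h0]; exact hRHS0
  have hB0 : 0 ≤ (-α) * s ^ (α - 1) * (b - a) := le_trans hDpos.le hDB
  -- interpolation
  have key : D ≤ (s ^ α) ^ (1 + α) * ((-α) * s ^ (α - 1) * (b - a)) ^ (-α) := by
    have hsplit : D = D ^ (1 + α) * D ^ (-α) := by
      rw [← Real.rpow_add hDpos]; simp
    rw [hsplit]
    exact mul_le_mul (Real.rpow_le_rpow hDpos.le hDA (by linarith))
      (Real.rpow_le_rpow hDpos.le hDB (by linarith))
      (Real.rpow_nonneg hDpos.le _) (Real.rpow_nonneg (Real.rpow_nonneg hs.le _) _)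
  refine key.trans ?_
  have hba0 : (0:ℝ) ≤ b - a := by linarith
  have hexp : ((-α) * s ^ (α - 1) * (b - a)) ^ (-α)
      = (-α) ^ (-α) * (s ^ (α - 1)) ^ (-α) * (b - a) ^ (-α) := by
    rw [Real.mul_rpow (mul_nonneg (by linarith) (Real.rpow_nonneg hs.le _)) hba0,
      Real.mul_rpow (by linarith) (Real.rpow_nonneg hs.le _)]
  rw [hexp]
  have h1 : (-α) ^ (-α) ≤ 1 :=
    Real.rpow_le_one (by linarith) (by linarith) (by linarith)
  have h2 : (s ^ α) ^ (1 + α) * (s ^ (α - 1)) ^ (-α) = s ^ (2 * α) := by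
    rw [← Real.rpow_mul hs.le, ← Real.rpow_mul hs.le, ← Real.rpow_add hs]
    congr 1; ring
  calc (s ^ α) ^ (1 + α) * ((-α) ^ (-α) * (s ^ (α - 1)) ^ (-α) * (b - a) ^ (-α))
      = (-α) ^ (-α) * ((s ^ α) ^ (1 + α) * (s ^ (α - 1)) ^ (-α) * (b - a) ^ (-α)) := by
        ring
    _ ≤ 1 * ((s ^ α) ^ (1 + α) * (s ^ (α - 1)) ^ (-α) * (b - a) ^ (-α)) :=
        mul_le_mul_of_nonneg_right h1 (by positivity)
    _ = (b - a) ^ (-α) * s ^ (2 * α) := by rw [one_mul, h2]; ring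


lemma mvn_part2_aux (H s t t' : ℝ) (hH0 : 0 < H) (hH : H < 1/2) (hs : 0 < s)
    (ht : 0 ≤ t) (htt : t ≤ t') :
    |(t' + s) ^ (H - 1/2) - (t + s) ^ (H - 1/2)|
      ≤ |t' - t| ^ (1/2 - H) * s ^ (2*H - 1) := by
  have hα0 : H - 1/2 < 0 := by linarith
  have key := mvn_neg_exp (H - 1/2) s (t + s) (t' + s) hα0 (by linarith) hs
    (by linarith) (by linarith)
  have hmono : (t' + s) ^ (H - 1/2) ≤ (t + s) ^ (H - 1/2) :=
    Real.rpow_le_rpow_of_nonpos (by linarith) (by linarith) hα0.le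
  rw [abs_of_nonpos (by linarith), abs_of_nonneg (by linarith : (0:ℝ) ≤ t' - t)]
  have e1 : t' + s - (t + s) = t' - t := by ring
  have e2 : -(H - 1/2) = 1/2 - H := by ring
  have e3 : 2 * (H - 1/2) = 2*H - 1 := by ring
  rw [e1, e2, e3] at key
  linarith

theorem mandelbrot_van_ness_kernel_holder
    (T H : ℝ) (hT : 0 < T) :
    ((H ∈ Set.Ioc (1 / 2 : ℝ) 1 →
      ∀ t ∈ Set.Icc (0 : ℝ) T, ∀ t' ∈ Set.Icc (0 : ℝ) T, ∀ s : ℝ, 0 < s →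
        |((t' + s) ^ (H - 1 / 2) - s ^ (H - 1 / 2))
          - ((t + s) ^ (H - 1 / 2) - s ^ (H - 1 / 2))|
          ≤ |t' - t| ^ (H - 1 / 2)) ∧
     (H ∈ Set.Ioc (0 : ℝ) (1 / 2) →
      ∃ C : ℝ, 0 < C ∧ ∀ t ∈ Set.Icc (0 : ℝ) T, ∀ t' ∈ Set.Icc (0 : ℝ) T, ∀ s : ℝ, 0 < s →
        |((t' + s) ^ (H - 1 / 2) - s ^ (H - 1 / 2))
          - ((t + s) ^ (H - 1 / 2) - s ^ (H - 1 / 2))|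
          ≤ C * |t' - t| ^ (1 / 2 - H) * s ^ (2 * H - 1))) := by
  constructor
  · rintro ⟨hH1, hH2⟩ t ht t' ht' s hs
    have e1 : ((t' + s) ^ (H - 1/2) - s ^ (H - 1/2))
        - ((t + s) ^ (H - 1/2) - s ^ (H - 1/2))
        = (t' + s) ^ (H - 1/2) - (t + s) ^ (H - 1/2) := by ring
    rw [e1]
    have h := mvn_abs_rpow_sub (t' + s) (t + s) (H - 1/2)
      (by linarith [ht'.1]) (by linarith [ht.1]) (by linarith) (by linarith)
    have e2 : t' + s - (t + s) = t' - t := by ring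
    rw [e2] at h
    exact h
  · rintro ⟨hH1, hH2⟩
    refine ⟨1, one_pos, fun t ht t' ht' s hs => ?_⟩
    rw [one_mul]
    have e1 : ((t' + s) ^ (H - 1/2) - s ^ (H - 1/2))
        - ((t + s) ^ (H - 1/2) - s ^ (H - 1/2))
        = (t' + s) ^ (H - 1/2) - (t + s) ^ (H - 1/2) := by ring
    rw [e1]
    rcases eq_or_lt_of_le hH2 with rfl | hHlt
    · norm_num
    rcases le_total t t' with htt | htt
    · exact mvn_part2_aux H s t t' hH1 hHlt hs ht.1 htt
    · rw [abs_sub_comm, abs_sub_comm t' t]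
      exact mvn_part2_aux H s t' t hH1 hHlt hs ht'.1 htt
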